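/- In a simple associative Γ-graded commutative algebra A over a field (with commutation rule ab = (-1)^{⟨ā,b̄⟩} ba for a bilinear map ⟨,⟩ : Γ×Γ → ℤ/2), every nonzero homogeneous element is neither a left nor a right zero divisor. -/

import Mathlib

/-- In a simple associative Γ-graded commutative algebra `A` over a field
(with commutation rule `a*b = (-1)^⟨ā,b̄⟩ b*a` for a biadditive map `⟨,⟩ : Γ×Γ → ℤ/2`),
every nonzero homogeneous element is neither a left nor a right zero divisor. -/
theorem stmt0 {Γ : Type*} [AddCommGroup Γ] [DecidableEq Γ]
    {K : Type*} [Field K] {A : Type*} [Ring A] [Algebra K A]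
    (bil : Γ →+ Γ →+ ZMod 2)
    (𝒜 : Γ → Submodule K A) (hgr : GradedAlgebra 𝒜)
    (hcomm : ∀ (γ γ' : Γ) (a b : A), a ∈ 𝒜 γ → b ∈ 𝒜 γ' →
      a * b = (-1 : A) ^ (bil γ γ').val * (b * a))
    (hsimple : IsSimpleRing A)
    {γ : Γ} {a : A} (ha : a ∈ 𝒜 γ) (ha0 : a ≠ 0) :
    (∀ b : A, a * b = 0 → b = 0) ∧ (∀ b : A, b * a = 0 → b = 0) := by
  classical
  have hcentral : ∀ (e : ℕ) (x : A), ((-1 : A) ^ e) * x = x * ((-1 : A) ^ e) :=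
    fun e x => ((Commute.neg_one_left x).pow_left e).eq
  constructor
  · -- right annihilator of a is a two-sided ideal
    intro b hb
    have key : ∀ (b : A), a * b = 0 → ∀ c : A, a * (c * b) = 0 := by
      intro b hb c
      refine DirectSum.Decomposition.inductionOn 𝒜 (motive := fun c => a * (c * b) = 0)
        (by simp) ?_ ?_ c
      · intro γ' m
        have h := hcomm γ γ' a m ha m.2
        have : a * ((m : A) * b) = (-1 : A) ^ (bil γ γ').val * ((m : A) * (a * b)) := by
          calc a * ((m : A) * b) = (a * (m : A)) * b := by rw [mul_assoc]
            _ = ((-1 : A) ^ (bil γ γ').val * ((m : A) * a)) * b := by rw [h]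
            _ = (-1 : A) ^ (bil γ γ').val * ((m : A) * (a * b)) := by
                rw [mul_assoc, mul_assoc]
        rw [this, hb, mul_zero, mul_zero]
      · intro m m' hm hm'
        rw [add_mul, mul_add, hm, hm', add_zero]
    set I : TwoSidedIdeal A := TwoSidedIdeal.mk' {x : A | a * x = 0}
      (by simp) (fun {x y} hx hy => by simp_all [mul_add])
      (fun {x} hx => by simp_all)
      (fun {x y} hy => by
        have := key y hy x
        simpa using this)
      (fun {x y} hx => by
        show a * (x * y) = 0
        rw [← mul_assoc, hx, zero_mul]) with hI
    have hb' : b ∈ I := by rw [hI, TwoSidedIdeal.mem_mk']; exact hb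
    rcases hsimple.1.eq_bot_or_eq_top I with h | h
    · rw [h, TwoSidedIdeal.mem_bot] at hb'; exact hb'
    · exfalso
      have h1 : (1 : A) ∈ I := by rw [h]; exact TwoSidedIdeal.mem_top A
      rw [hI, TwoSidedIdeal.mem_mk'] at h1
      simp only [Set.mem_setOf_eq, mul_one] at h1
      exact ha0 h1
  · intro b hb
    have key : ∀ (b : A), b * a = 0 → ∀ c : A, (b * c) * a = 0 := by
      intro b hb c
      refine DirectSum.Decomposition.inductionOn 𝒜 (motive := fun c => (b * c) * a = 0)
        (by simp) ?_ ?_ c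
      · intro γ' m
        have h := hcomm γ' γ (m : A) a m.2 ha
        have : (b * (m : A)) * a = (b * a) * ((-1 : A) ^ (bil γ' γ).val * (m : A)) := by
          calc (b * (m : A)) * a = b * ((m : A) * a) := by rw [mul_assoc]
            _ = b * ((-1 : A) ^ (bil γ' γ).val * (a * (m : A))) := by rw [h]
            _ = b * ((a * ((-1 : A) ^ (bil γ' γ).val)) * (m : A)) := by
                rw [← hcentral, mul_assoc]
            _ = (b * a) * ((-1 : A) ^ (bil γ' γ).val * (m : A)) := by
                rw [mul_assoc, mul_assoc]
        rw [this, hb, zero_mul]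
      · intro m m' hm hm'
        rw [mul_add, add_mul, hm, hm', add_zero]
    set I : TwoSidedIdeal A := TwoSidedIdeal.mk' {x : A | x * a = 0}
      (by simp) (fun {x y} hx hy => by simp_all [add_mul])
      (fun {x} hx => by simp_all)
      (fun {x y} hy => by
        show (x * y) * a = 0
        rw [mul_assoc, hy, mul_zero])
      (fun {x y} hx => by
        have := key x hx y
        simpa using this) with hI
    have hb' : b ∈ I := by rw [hI, TwoSidedIdeal.mem_mk']; exact hb
    rcases hsimple.1.eq_bot_or_eq_top I with h | h
    · rw [h, TwoSidedIdeal.mem_bot] at hb'; exact hb'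
    · exfalso
      have h1 : (1 : A) ∈ I := by rw [h]; exact TwoSidedIdeal.mem_top A
      rw [hI, TwoSidedIdeal.mem_mk'] at h1
      simp only [Set.mem_setOf_eq, one_mul] at h1
      exact ha0 h1
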